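/- For every nonnegative integer n, Σ_{k=0}^n k H_{n+k} = (n(n+1)/2) H_n + n(n+1)/4. -/

import Mathlib

/-- Generalized harmonic number `H n m = ∑_{k=1}^n 1/k^m` (order `m : ℤ`), as a rational. -/
def H (n : ℕ) (m : ℤ) : ℚ := ∑ k ∈ Finset.range n, ((k : ℚ) + 1) ^ (-m)

lemma H_succ (n : ℕ) : H (n + 1) 1 = H n 1 + 1 / ((n : ℚ) + 1) := by
  simp [H, Finset.sum_range_succ, one_div]

lemma H_add (n m : ℕ) :
    H (n + m) 1 = H n 1 + ∑ k ∈ Finset.range m, 1 / ((n : ℚ) + k + 1) := by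
  induction m with
  | zero => simp
  | succ m ih =>
      rw [← Nat.add_assoc, H_succ, ih, Finset.sum_range_succ]
      push_cast
      ring

theorem sum_k_harmonic_shifted (n : ℕ) :
    ∑ k ∈ Finset.range (n + 1), (k : ℚ) * H (n + k) 1
      = ((n : ℚ) * ((n : ℚ) + 1) / 2) * H n 1 + (n : ℚ) * ((n : ℚ) + 1) / 4 := by
  induction n with
  | zero => simp [H]
  | succ n ih =>
      have hterm : ∀ k ∈ Finset.range (n + 2),
          (k : ℚ) * H (n + 1 + k) 1
            = (k : ℚ) * H (n + k) 1 + (1 - ((n : ℚ) + 1) * (1 / ((n : ℚ) + k + 1))) := by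
        intro k hk
        have h1 : n + 1 + k = (n + k) + 1 := by omega
        rw [h1, H_succ]
        have hne : ((n : ℚ) + k + 1) ≠ 0 := by positivity
        push_cast
        field_simp
        ring
      rw [Finset.sum_congr rfl hterm, Finset.sum_add_distrib, Finset.sum_range_succ _ (n + 1), ih,
        Finset.sum_sub_distrib, Finset.sum_const, ← Finset.mul_sum,
        Finset.sum_range_succ (fun k => 1 / ((n : ℚ) + k + 1)) (n + 1),
        H_add n (n + 1), H_succ n]
      set S := ∑ k ∈ Finset.range (n + 1), 1 / ((n : ℚ) + k + 1) with hS
      set h := H n 1 with hh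
      have hne : ((n : ℚ) + (n + 1 : ℕ) + 1) ≠ 0 := by positivity
      have hne2 : ((n : ℚ) + 1) ≠ 0 := by positivity
      push_cast [Finset.card_range] at hne ⊢
      field_simp
      ring
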